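/- Suppose M = 4Z + 3 for some integer Z ≥ 0 and the couplings are uniform with γ_m = γ ≠ 0 and J_m = J for all edges m. Then there exists a nonzero vector Ψ ∈ W₁^↑, independent of the on-site potential, such that for every on-site potential μ : {1,…,M} → ℝ the Krylov subspace span{(H_γ + H_J + H_μ)^k Ψ : k ∈ ℕ} has dimension at most M·2^{3Z+1}. Since dim W₁^↑ = M·2^{4Z+2}, this Krylov subspace is a proper subspace of W₁^↑ for every μ; hence Hilbert space fragmentation of the Q = 1 sector survives the addition of an arbitrary random on-site potential. -/

import Mathlib

open scoped BigOperators

namespace QuantumBreakdown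

/-- Basis index: pairs of an occupation configuration and a spin configuration. -/
abbrev Cfg (M : ℕ) := (Fin M → Bool) × (Fin M → Bool)

/-- The Hilbert space `V_M`. -/
abbrev V (M : ℕ) := Cfg M → ℂ

/-- The basis vector `e_{n,s}`. -/
noncomputable def e (M : ℕ) (p : Cfg M) : V M := Pi.single p 1

/-- The linear operator determined by prescribed images of the basis vectors. -/
noncomputable def mkOp (M : ℕ) (f : Cfg M → V M) : V M →ₗ[ℂ] V M :=
  (Pi.basisFun ℂ (Cfg M)).constr ℂ f

/-- The left site of edge `m`. -/
def sL (M : ℕ) (m : Fin (M - 1)) : Fin M := ⟨m.1, by have := m.2; omega⟩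

/-- The right site of edge `m`. -/
def sR (M : ℕ) (m : Fin (M - 1)) : Fin M := ⟨m.1 + 1, by have := m.2; omega⟩

/-- Move a fermion from site `a` to site `b`. -/
def hop (M : ℕ) (n : Fin M → Bool) (a b : Fin M) : Fin M → Bool :=
  Function.update (Function.update n a false) b true

/-- The hopping term `H_γ`. -/
noncomputable def Hgam (M : ℕ) (γ : Fin (M - 1) → ℝ) : V M →ₗ[ℂ] V M :=
  mkOp M fun p =>
    -∑ m : Fin (M - 1), (γ m : ℂ) •
      ((if p.1 (sL M m) = true ∧ p.1 (sR M m) = false then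
          e M (hop M p.1 (sL M m) (sR M m), p.2) else 0)
        +
       (if p.1 (sR M m) = true ∧ p.1 (sL M m) = false then
          e M (hop M p.1 (sR M m) (sL M m), p.2) else 0))

/-- The breakdown interaction `H_J`. -/
noncomputable def HJop (M : ℕ) (J : Fin (M - 1) → ℝ) : V M →ₗ[ℂ] V M :=
  mkOp M fun p =>
    ∑ m : Fin (M - 1), (J m : ℂ) •
      ((if p.1 (sL M m) = true ∧ p.1 (sR M m) = false ∧ p.2 (sR M m) = false then
          e M (hop M p.1 (sL M m) (sR M m), Function.update p.2 (sR M m) true) else 0)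
        +
       (if p.1 (sR M m) = true ∧ p.1 (sL M m) = false ∧ p.2 (sR M m) = true then
          e M (hop M p.1 (sR M m) (sL M m), Function.update p.2 (sR M m) false) else 0))

/-- The on-site potential `H_μ`. -/
noncomputable def Hmu (M : ℕ) (μ : Fin M → ℝ) : V M →ₗ[ℂ] V M :=
  mkOp M fun p => (∑ m : Fin M, if p.1 m = true then (μ m : ℂ) else 0) • e M p

/-- Pauli `σ^x` at site `m`. -/
noncomputable def sigx (M : ℕ) (m : Fin M) : V M →ₗ[ℂ] V M :=
  mkOp M fun p => e M (p.1, Function.update p.2 m (!p.2 m))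

/-- Pauli `σ^y` at site `m`. -/
noncomputable def sigy (M : ℕ) (m : Fin M) : V M →ₗ[ℂ] V M :=
  mkOp M fun p =>
    (if p.2 m = true then Complex.I else -Complex.I) • e M (p.1, Function.update p.2 m (!p.2 m))

/-- Pauli `σ^z` at site `m`. -/
noncomputable def sigz (M : ℕ) (m : Fin M) : V M →ₗ[ℂ] V M :=
  mkOp M fun p => (if p.2 m = true then (1 : ℂ) else -1) • e M p

/-- The magnetic field term `H_h`. -/
noncomputable def Hh (M : ℕ) (hx hy hz : Fin M → ℝ) : V M →ₗ[ℂ] V M :=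
  ∑ m : Fin M, ((hx m : ℂ) • sigx M m + (hy m : ℂ) • sigy M m + (hz m : ℂ) • sigz M m)

/-- Number of occupied sites of an occupation configuration. -/
def nOcc (M : ℕ) (n : Fin M → Bool) : ℕ := (Finset.univ.filter fun m => n m = true).card

/-- The number operator `N`. -/
noncomputable def numOp (M : ℕ) : V M →ₗ[ℂ] V M :=
  mkOp M fun p => (nOcc M p.1 : ℂ) • e M p

/-- The charge-`Q` sector `W_Q`. -/
noncomputable def sector (M Q : ℕ) : Submodule ℂ (V M) :=
  Submodule.span ℂ { v | ∃ p : Cfg M, nOcc M p.1 = Q ∧ v = e M p }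

/-- The charge-`Q` sector with first spin up, `W_Q^↑`. -/
noncomputable def sectorUp (M : ℕ) (hM : 0 < M) (Q : ℕ) : Submodule ℂ (V M) :=
  Submodule.span ℂ { v | ∃ p : Cfg M, nOcc M p.1 = Q ∧ p.2 ⟨0, hM⟩ = true ∧ v = e M p }

end QuantumBreakdown

open QuantumBreakdown


namespace Frag
open QuantumBreakdown

variable {M : ℕ}

def P (M : ℕ) (x : Fin M) : Fin M → Bool := fun j => decide (j = x)

lemma P_eq_true {x j : Fin M} : P M x j = true ↔ j = x := by simp [P]

lemma P_self (x : Fin M) : P M x x = true := by simp [P]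

lemma sum_collapse_L (x : Fin M) (F : Fin (M-1) → V M)
    (hF : ∀ m, ¬ (sL M m = x) → F m = 0) :
    ∑ m : Fin (M-1), F m = if h : x.1+1 < M then F ⟨x.1, by omega⟩ else 0 := by
  by_cases h : x.1 + 1 < M
  · rw [dif_pos h]
    apply Finset.sum_eq_single
    · intro b _ hb
      exact hF b fun hP => hb (Fin.ext (by simpa [sL] using congrArg Fin.val hP))
    · intro hmem; exact absurd (Finset.mem_univ _) hmem
  · rw [dif_neg h]
    refine Finset.sum_eq_zero fun m _ => hF m fun hP => ?_
    have hv := congrArg Fin.val hP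
    simp only [sL] at hv
    have := m.2; have := x.2; omega

lemma sum_collapse_R (x : Fin M) (F : Fin (M-1) → V M)
    (hF : ∀ m, ¬ (sR M m = x) → F m = 0) :
    ∑ m : Fin (M-1), F m = if h : 0 < x.1 then F ⟨x.1 - 1, by have := x.2; omega⟩ else 0 := by
  by_cases h : 0 < x.1
  · rw [dif_pos h]
    apply Finset.sum_eq_single
    · intro b _ hb
      refine hF b fun hP => ?_
      have hv := congrArg Fin.val hP
      simp only [sR] at hv
      exact hb (Fin.ext (show b.1 = x.1 - 1 by omega))
    · intro hmem; exact absurd (Finset.mem_univ _) hmem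
  · rw [dif_neg h]
    refine Finset.sum_eq_zero fun m _ => hF m fun hP => ?_
    have hv := congrArg Fin.val hP
    simp only [sR] at hv
    omega

lemma hop_P (x y : Fin M) (hxy : x ≠ y) : hop M (P M x) x y = P M y := by
  funext j
  unfold hop
  rcases eq_or_ne j y with rfl | hy
  · simp [Function.update, P]
  · rw [Function.update_of_ne hy]
    rcases eq_or_ne j x with rfl | hx
    · simp [Function.update, P, hxy]
    · rw [Function.update_of_ne hx]
      simp [P, hx, hy]

-- test: backward gamma sum alone
example (g : ℝ) (x : Fin M) (s : Fin M → Bool) :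
    ∑ m : Fin (M-1), (g:ℂ) • (if P M x (sR M m) = true ∧ P M x (sL M m) = false then
        e M (hop M (P M x) (sR M m) (sL M m), s) else 0)
    = if h : 0 < x.1 then (g:ℂ) • e M (P M ⟨x.1-1, by have := x.2; omega⟩, s) else 0 := by
  rw [sum_collapse_R x _ (fun m hm => by
    rw [if_neg (fun hc => hm (P_eq_true.mp hc.1)), smul_zero])]
  by_cases h : 0 < x.1
  · rw [dif_pos h, dif_pos h]
    congr 1
    have e2 : sR M (⟨x.1-1, by have := x.2; omega⟩ : Fin (M-1)) = x :=
      Fin.ext (by simp [sR]; omega)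
    have hne : x ≠ (⟨x.1-1, by have := x.2; omega⟩ : Fin M) := fun hc => by
      have := congrArg Fin.val hc; simp at this; omega
    have e1 : sL M (⟨x.1-1, by have := x.2; omega⟩ : Fin (M-1)) =
        (⟨x.1-1, by have := x.2; omega⟩ : Fin M) := rfl
    rw [e2, e1, if_pos ⟨P_self x, decide_eq_false (Ne.symm hne)⟩, hop_P x _ hne]
  · rw [dif_neg h, dif_neg h]

lemma mkOp_apply_e (f : Cfg M → V M) (p : Cfg M) : mkOp M f (e M p) = f p := by
  have he : e M p = Pi.basisFun ℂ (Cfg M) p := by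
    rw [Pi.basisFun_apply]; rfl
  rw [mkOp, he, Module.Basis.constr_basis]

lemma sum_gamL (g : ℝ) (x : Fin M) (s : Fin M → Bool) :
    ∑ m : Fin (M-1), (g:ℂ) • (if P M x (sL M m) = true ∧ P M x (sR M m) = false then
        e M (hop M (P M x) (sL M m) (sR M m), s) else 0)
    = if h : x.1+1 < M then (g:ℂ) • e M (P M ⟨x.1+1, h⟩, s) else 0 := by
  rw [sum_collapse_L x _ (fun m hm => by
    rw [if_neg (fun hc => hm (P_eq_true.mp hc.1)), smul_zero])]
  by_cases h : x.1 + 1 < M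
  · rw [dif_pos h, dif_pos h]
    congr 1
    have e1 : sL M (⟨x.1, by omega⟩ : Fin (M-1)) = x := rfl
    have e2 : sR M (⟨x.1, by omega⟩ : Fin (M-1)) = (⟨x.1+1, h⟩ : Fin M) := rfl
    have hne : x ≠ (⟨x.1+1, h⟩ : Fin M) := fun hc => by
      have := congrArg Fin.val hc; simp at this
    rw [e1, e2, if_pos ⟨P_self x, decide_eq_false hne.symm⟩, hop_P x _ hne]
  · rw [dif_neg h, dif_neg h]

lemma sum_gamR (g : ℝ) (x : Fin M) (s : Fin M → Bool) :
    ∑ m : Fin (M-1), (g:ℂ) • (if P M x (sR M m) = true ∧ P M x (sL M m) = false then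
        e M (hop M (P M x) (sR M m) (sL M m), s) else 0)
    = if h : 0 < x.1 then (g:ℂ) • e M (P M ⟨x.1-1, by have := x.2; omega⟩, s) else 0 := by
  rw [sum_collapse_R x _ (fun m hm => by
    rw [if_neg (fun hc => hm (P_eq_true.mp hc.1)), smul_zero])]
  by_cases h : 0 < x.1
  · rw [dif_pos h, dif_pos h]
    congr 1
    have e2 : sR M (⟨x.1-1, by have := x.2; omega⟩ : Fin (M-1)) = x :=
      Fin.ext (by simp [sR]; omega)
    have hne : x ≠ (⟨x.1-1, by have := x.2; omega⟩ : Fin M) := fun hc => by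
      have := congrArg Fin.val hc; simp at this; omega
    have e1 : sL M (⟨x.1-1, by have := x.2; omega⟩ : Fin (M-1)) =
        (⟨x.1-1, by have := x.2; omega⟩ : Fin M) := rfl
    rw [e2, e1, if_pos ⟨P_self x, decide_eq_false (Ne.symm hne)⟩, hop_P x _ hne]
  · rw [dif_neg h, dif_neg h]

lemma sum_JL (Jc : ℝ) (x : Fin M) (s : Fin M → Bool) :
    ∑ m : Fin (M-1), (Jc:ℂ) • (if P M x (sL M m) = true ∧ P M x (sR M m) = false ∧ s (sR M m) = false then
        e M (hop M (P M x) (sL M m) (sR M m), Function.update s (sR M m) true) else 0)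
    = if h : x.1+1 < M then
        (if s ⟨x.1+1, h⟩ = false then
          (Jc:ℂ) • e M (P M ⟨x.1+1, h⟩, Function.update s ⟨x.1+1, h⟩ true) else 0)
      else 0 := by
  rw [sum_collapse_L x _ (fun m hm => by
    rw [if_neg (fun hc => hm (P_eq_true.mp hc.1)), smul_zero])]
  by_cases h : x.1 + 1 < M
  · rw [dif_pos h, dif_pos h]
    have e1 : sL M (⟨x.1, by omega⟩ : Fin (M-1)) = x := rfl
    have e2 : sR M (⟨x.1, by omega⟩ : Fin (M-1)) = (⟨x.1+1, h⟩ : Fin M) := rfl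
    have hne : x ≠ (⟨x.1+1, h⟩ : Fin M) := fun hc => by
      have := congrArg Fin.val hc; simp at this
    rw [e1, e2, hop_P x _ hne]
    by_cases hs : s (⟨x.1+1, h⟩ : Fin M) = false
    · rw [if_pos ⟨P_self x, decide_eq_false hne.symm, hs⟩, if_pos hs]
    · rw [if_neg (fun hc => hs hc.2.2), if_neg hs, smul_zero]
  · rw [dif_neg h, dif_neg h]

lemma sum_JR (Jc : ℝ) (x : Fin M) (s : Fin M → Bool) :
    ∑ m : Fin (M-1), (Jc:ℂ) • (if P M x (sR M m) = true ∧ P M x (sL M m) = false ∧ s (sR M m) = true then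
        e M (hop M (P M x) (sR M m) (sL M m), Function.update s (sR M m) false) else 0)
    = if h : 0 < x.1 then
        (if s x = true then
          (Jc:ℂ) • e M (P M ⟨x.1-1, by have := x.2; omega⟩, Function.update s x false) else 0)
      else 0 := by
  rw [sum_collapse_R x _ (fun m hm => by
    rw [if_neg (fun hc => hm (P_eq_true.mp hc.1)), smul_zero])]
  by_cases h : 0 < x.1
  · rw [dif_pos h, dif_pos h]
    have e2 : sR M (⟨x.1-1, by have := x.2; omega⟩ : Fin (M-1)) = x :=
      Fin.ext (by simp [sR]; omega)
    have hne : x ≠ (⟨x.1-1, by have := x.2; omega⟩ : Fin M) := fun hc => by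
      have := congrArg Fin.val hc; simp at this; omega
    have e1 : sL M (⟨x.1-1, by have := x.2; omega⟩ : Fin (M-1)) =
        (⟨x.1-1, by have := x.2; omega⟩ : Fin M) := rfl
    rw [e2, e1, hop_P x _ hne]
    by_cases hs : s x = true
    · rw [if_pos ⟨P_self x, decide_eq_false hne.symm, hs⟩, if_pos hs]
    · rw [if_neg (fun hc => hs hc.2.2), if_neg hs, smul_zero]
  · rw [dif_neg h, dif_neg h]

lemma Hgam_e (g : ℝ) (x : Fin M) (s : Fin M → Bool) :
    Hgam M (fun _ => g) (e M (P M x, s)) =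
      -(if h : x.1+1 < M then (g:ℂ) • e M (P M ⟨x.1+1, h⟩, s) else 0)
      + -(if h : 0 < x.1 then (g:ℂ) • e M (P M ⟨x.1-1, by have := x.2; omega⟩, s) else 0) := by
  rw [Hgam, mkOp_apply_e]
  simp only [smul_add, Finset.sum_add_distrib, neg_add]
  rw [sum_gamL g x s, sum_gamR g x s]

lemma HJop_e (Jc : ℝ) (x : Fin M) (s : Fin M → Bool) :
    HJop M (fun _ => Jc) (e M (P M x, s)) =
      (if h : x.1+1 < M then
        (if s ⟨x.1+1, h⟩ = false then
          (Jc:ℂ) • e M (P M ⟨x.1+1, h⟩, Function.update s ⟨x.1+1, h⟩ true) else 0)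
      else 0)
      + (if h : 0 < x.1 then
        (if s x = true then
          (Jc:ℂ) • e M (P M ⟨x.1-1, by have := x.2; omega⟩, Function.update s x false) else 0)
      else 0) := by
  rw [HJop, mkOp_apply_e]
  simp only [smul_add, Finset.sum_add_distrib]
  rw [sum_JL Jc x s, sum_JR Jc x s]

lemma Hmu_e (μ : Fin M → ℝ) (x : Fin M) (s : Fin M → Bool) :
    Hmu M μ (e M (P M x, s)) = (μ x : ℂ) • e M (P M x, s) := by
  rw [Hmu, mkOp_apply_e]
  congr 1
  calc ∑ m : Fin M, (if P M x m = true then (μ m:ℂ) else 0)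
      = ∑ m : Fin M, (if m = x then (μ m:ℂ) else 0) :=
        Finset.sum_congr rfl (fun m _ => if_congr P_eq_true rfl rfl)
    _ = (μ x : ℂ) := by
        rw [Finset.sum_ite_eq' Finset.univ x fun m => (μ m:ℂ)]
        simp

noncomputable def lam (γ J : ℝ) : ℝ :=
  if J = 0 then γ^2 else (2*γ^2 + J^2 + Real.sqrt (J^4 + 4*γ^2*J^2))/2

noncomputable def va (γ J : ℝ) : ℝ := if J = 0 then 1 else lam γ J - γ^2
noncomputable def vb (γ J : ℝ) : ℝ := -γ*J
noncomputable def wa (γ J : ℝ) : ℝ := -γ * va γ J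
noncomputable def wb (γ J : ℝ) : ℝ := J * va γ J - γ * vb γ J

lemma lam_quad (γ J : ℝ) : lam γ J ^2 = (2*γ^2+J^2) * lam γ J - γ^4 := by
  unfold lam
  by_cases h : J = 0
  · simp [h]; ring
  · rw [if_neg h]
    have h0 : (0:ℝ) ≤ J^4 + 4*γ^2*J^2 := by positivity
    have hs := Real.sq_sqrt h0
    nlinarith [hs]

lemma eqA (γ J : ℝ) : -γ * wa γ J + J * wb γ J = lam γ J * va γ J := by
  have hq := lam_quad γ J
  unfold wa wb va
  by_cases h : J = 0
  · simp [h, lam]; ring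
  · rw [if_neg h]
    unfold vb
    nlinarith [hq]

lemma eqB (γ J : ℝ) : -γ * wb γ J = lam γ J * vb γ J := by
  unfold wb va vb
  by_cases h : J = 0
  · simp [h]
  · rw [if_neg h]; ring

lemma va_ne (γ J : ℝ) (hJ : J = 0) : va γ J ≠ 0 := by simp [va, hJ]
lemma vb_ne (γ J : ℝ) (hγ : γ ≠ 0) (hJ : J ≠ 0) : vb γ J ≠ 0 := by
  simp [vb]; exact ⟨hγ, hJ⟩

/-- single site amplitude -/
noncomputable def aamp (γ J : ℝ) (x : ℕ) {M : ℕ} (j : Fin M) (b : Bool) : ℂ :=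
  if j.1 = 0 then (if b then 1 else 0)
  else if j.1 ≤ x then (if b then (wb γ J : ℂ) else (wa γ J : ℂ))
  else (if b then (vb γ J : ℂ) else (va γ J : ℂ))

/-- coefficient of spin configuration `s` -/
noncomputable def cw (γ J : ℝ) (x : ℕ) {M : ℕ} (s : Fin M → Bool) : ℂ :=
  ∏ j, aamp γ J x j (s j)

/-- the invariant-subspace generators -/
noncomputable def wvec (γ J : ℝ) (M : ℕ) (x : Fin M) : V M :=
  ∑ s : Fin M → Bool, cw γ J x.1 s • e M (P M x, s)

lemma update_invol (k : Fin M) :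
    Function.Involutive (fun s : Fin M → Bool => Function.update s k (!(s k))) := by
  intro s
  funext j
  rcases eq_or_ne j k with rfl | hj
  · simp [Function.update]
  · simp [Function.update_of_ne hj]

lemma sum_update_true (k : Fin M) (G : (Fin M → Bool) → V M) :
    ∑ s : Fin M → Bool, (if s k = false then G (Function.update s k true) else 0)
      = ∑ s : Fin M → Bool, (if s k = true then G s else 0) := by
  refine (Fintype.sum_bijective _ (update_invol k).bijective _ _ fun s => ?_).symm
  rcases hs : s k with _ | _
  · simp [hs, Function.update_self]
  · have h1 : Function.update s k (!(s k)) = Function.update s k false := by rw [hs]; rfl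
    have h2 : Function.update (Function.update s k false) k true = s := by
      rw [Function.update_idem, ← hs, Function.update_eq_self]
    simp [hs, h1, Function.update_self, h2]

lemma sum_update_false (k : Fin M) (G : (Fin M → Bool) → V M) :
    ∑ s : Fin M → Bool, (if s k = true then G (Function.update s k false) else 0)
      = ∑ s : Fin M → Bool, (if s k = false then G s else 0) := by
  refine (Fintype.sum_bijective _ (update_invol k).bijective _ _ fun s => ?_).symm
  rcases hs : s k with _ | _
  · have h1 : Function.update s k (!(s k)) = Function.update s k true := by rw [hs]; rfl
    have h2 : Function.update (Function.update s k true) k false = s := by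
      rw [Function.update_idem, ← hs, Function.update_eq_self]
    simp [hs, h1, Function.update_self, h2]
  · simp [hs, Function.update_self]

lemma cw_factor (γ J : ℝ) (x : ℕ) (k : Fin M) (s : Fin M → Bool) :
    cw γ J x s = aamp γ J x k (s k) * ∏ j ∈ Finset.univ.erase k, aamp γ J x j (s j) :=
  (Finset.mul_prod_erase Finset.univ _ (Finset.mem_univ k)).symm

lemma key_forward (γ J : ℝ) (x : Fin M) (h : x.1 + 1 < M) (s : Fin M → Bool) :
    -(γ:ℂ) * cw γ J x.1 s
      + (if s ⟨x.1+1, h⟩ = true then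
          (J:ℂ) * cw γ J x.1 (Function.update s ⟨x.1+1, h⟩ false) else 0)
    = cw γ J (x.1+1) s := by
  set x' : Fin M := ⟨x.1+1, h⟩ with hx'
  have hR : ∀ t : Fin M → Bool, (∀ j : Fin M, j ≠ x' → t j = s j) →
      ∏ j ∈ Finset.univ.erase x', aamp γ J x.1 j (t j)
      = ∏ j ∈ Finset.univ.erase x', aamp γ J (x.1+1) j (s j) := by
    intro t ht
    refine Finset.prod_congr rfl fun j hj => ?_
    have hjne : j ≠ x' := (Finset.mem_erase.mp hj).1
    rw [ht j hjne]
    have hv : j.1 ≠ x.1 + 1 := fun hc => hjne (Fin.ext hc)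
    unfold aamp
    have : (j.1 ≤ x.1) ↔ (j.1 ≤ x.1 + 1) := by omega
    simp only [this]
  have h1 : cw γ J x.1 s = aamp γ J x.1 x' (s x')
      * ∏ j ∈ Finset.univ.erase x', aamp γ J (x.1+1) j (s j) := by
    rw [cw_factor γ J x.1 x' s, hR s (fun _ _ => rfl)]
  have h2 : cw γ J (x.1+1) s = aamp γ J (x.1+1) x' (s x')
      * ∏ j ∈ Finset.univ.erase x', aamp γ J (x.1+1) j (s j) := by
    rw [cw_factor γ J (x.1+1) x' s]
  have h3 : cw γ J x.1 (Function.update s x' false) = aamp γ J x.1 x' false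
      * ∏ j ∈ Finset.univ.erase x', aamp γ J (x.1+1) j (s j) := by
    rw [cw_factor γ J x.1 x' (Function.update s x' false), Function.update_self,
      hR _ (fun j hj => Function.update_of_ne hj _ _)]
  have ha1 : aamp γ J x.1 x' (s x') = (if s x' then (vb γ J:ℂ) else (va γ J:ℂ)) := by
    unfold aamp
    rw [if_neg (by simp [hx']), if_neg (by simp [hx'])]
  have ha2 : aamp γ J (x.1+1) x' (s x') = (if s x' then (wb γ J:ℂ) else (wa γ J:ℂ)) := by
    unfold aamp
    rw [if_neg (by simp [hx']), if_pos (by simp [hx'])]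
  have ha3 : aamp γ J x.1 x' false = (va γ J : ℂ) := by
    unfold aamp
    rw [if_neg (by simp [hx']), if_neg (by simp [hx'])]
    rfl
  rw [h1, h2, h3, ha1, ha2, ha3]
  have hwa : ((wa γ J : ℝ) : ℂ) = -(γ:ℂ) * va γ J := by rw [wa]; push_cast; ring
  have hwb : ((wb γ J : ℝ) : ℂ) = (J:ℂ) * va γ J - γ * vb γ J := by rw [wb]; push_cast; ring
  rcases hs : s x' with _ | _
  · simp only [reduceIte, Bool.false_eq_true, if_false]
    rw [hwa]; ring
  · simp only [reduceIte]
    rw [hwb]; ring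

lemma key_backward (γ J : ℝ) (x : Fin M) (h : 0 < x.1) (s : Fin M → Bool) :
    -(γ:ℂ) * cw γ J x.1 s
      + (if s x = false then
          (J:ℂ) * cw γ J x.1 (Function.update s x true) else 0)
    = (lam γ J : ℂ) * cw γ J (x.1-1) s := by
  have hR : ∀ t : Fin M → Bool, (∀ j : Fin M, j ≠ x → t j = s j) →
      ∏ j ∈ Finset.univ.erase x, aamp γ J x.1 j (t j)
      = ∏ j ∈ Finset.univ.erase x, aamp γ J (x.1-1) j (s j) := by
    intro t ht
    refine Finset.prod_congr rfl fun j hj => ?_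
    have hjne : j ≠ x := (Finset.mem_erase.mp hj).1
    rw [ht j hjne]
    have hv : j.1 ≠ x.1 := fun hc => hjne (Fin.ext hc)
    unfold aamp
    have : (j.1 ≤ x.1) ↔ (j.1 ≤ x.1 - 1) := by omega
    simp only [this]
  have h1 : cw γ J x.1 s = aamp γ J x.1 x (s x)
      * ∏ j ∈ Finset.univ.erase x, aamp γ J (x.1-1) j (s j) := by
    rw [cw_factor γ J x.1 x s, hR s (fun _ _ => rfl)]
  have h2 : cw γ J (x.1-1) s = aamp γ J (x.1-1) x (s x)
      * ∏ j ∈ Finset.univ.erase x, aamp γ J (x.1-1) j (s j) := by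
    rw [cw_factor γ J (x.1-1) x s]
  have h3 : cw γ J x.1 (Function.update s x true) = aamp γ J x.1 x true
      * ∏ j ∈ Finset.univ.erase x, aamp γ J (x.1-1) j (s j) := by
    rw [cw_factor γ J x.1 x (Function.update s x true), Function.update_self,
      hR _ (fun j hj => Function.update_of_ne hj _ _)]
  have hx0 : x.1 ≠ 0 := by omega
  have ha1 : aamp γ J x.1 x (s x) = (if s x then (wb γ J:ℂ) else (wa γ J:ℂ)) := by
    unfold aamp
    rw [if_neg hx0, if_pos le_rfl]
  have ha2 : aamp γ J (x.1-1) x (s x) = (if s x then (vb γ J:ℂ) else (va γ J:ℂ)) := by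
    unfold aamp
    rw [if_neg hx0, if_neg (by omega)]
  have ha3 : aamp γ J x.1 x true = (wb γ J : ℂ) := by
    unfold aamp
    rw [if_neg hx0, if_pos le_rfl]
    rfl
  rw [h1, h2, h3, ha1, ha2, ha3]
  have heqA : -(γ:ℂ) * ((wa γ J : ℝ) : ℂ) + (J:ℂ) * ((wb γ J : ℝ) : ℂ)
      = ((lam γ J : ℝ) : ℂ) * ((va γ J : ℝ) : ℂ) := by
    exact_mod_cast congrArg (fun r : ℝ => (r:ℂ)) (eqA γ J)
  have heqB : -(γ:ℂ) * ((wb γ J : ℝ) : ℂ) = ((lam γ J : ℝ) : ℂ) * ((vb γ J : ℝ) : ℂ) := by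
    exact_mod_cast congrArg (fun r : ℝ => (r:ℂ)) (eqB γ J)
  rcases hs : s x with _ | _
  · simp only [reduceIte, Bool.false_eq_true, if_false]
    linear_combination (∏ j ∈ Finset.univ.erase x, aamp γ J (x.1-1) j (s j)) * heqA
  · simp only [reduceIte, Bool.true_eq_false, if_false]
    linear_combination (∏ j ∈ Finset.univ.erase x, aamp γ J (x.1-1) j (s j)) * heqB

lemma forward_pair (γ J : ℝ) (x : Fin M) :
    (∑ s : Fin M → Bool, cw γ J x.1 s •
        -(if h : x.1+1 < M then (γ:ℂ) • e M (P M ⟨x.1+1, h⟩, s) else 0))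
    + (∑ s : Fin M → Bool, cw γ J x.1 s •
        (if h : x.1+1 < M then
          (if s ⟨x.1+1, h⟩ = false then
            (J:ℂ) • e M (P M ⟨x.1+1, h⟩, Function.update s ⟨x.1+1, h⟩ true) else 0)
        else 0))
    = if h : x.1+1 < M then wvec γ J M ⟨x.1+1, h⟩ else 0 := by
  by_cases h : x.1 + 1 < M
  · simp only [dif_pos h]
    set x' : Fin M := ⟨x.1+1, h⟩ with hx'
    have h2 : (∑ s : Fin M → Bool, cw γ J x.1 s •
          (if s x' = false then (J:ℂ) • e M (P M x', Function.update s x' true) else 0))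
        = ∑ s : Fin M → Bool, (if s x' = true then
            (J:ℂ) * cw γ J x.1 (Function.update s x' false) else 0) • e M (P M x', s) := by
      have step1 : (∑ s : Fin M → Bool, cw γ J x.1 s •
            (if s x' = false then (J:ℂ) • e M (P M x', Function.update s x' true) else 0))
          = ∑ s : Fin M → Bool, (if s x' = false then
              (fun t => ((J:ℂ) * cw γ J x.1 (Function.update t x' false)) • e M (P M x', t))
                (Function.update s x' true) else 0) := by
        refine Finset.sum_congr rfl fun s _ => ?_
        rcases hs : s x' with _ | _
        · simp only [reduceIte]
          rw [smul_smul, Function.update_idem]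
          rw [show Function.update s x' false = s by rw [← hs, Function.update_eq_self]]
          ring_nf
        · simp only [reduceIte, Bool.true_eq_false, if_false, smul_zero]
      refine step1.trans (Eq.trans (sum_update_true x'
        (fun t => ((J:ℂ) * cw γ J x.1 (Function.update t x' false)) • e M (P M x', t))) ?_)
      refine Finset.sum_congr rfl fun s _ => ?_
      rcases hs : s x' with _ | _
      · simp only [reduceIte, Bool.false_eq_true, if_false, zero_smul]
      · simp only [reduceIte, ite_smul, zero_smul]
    have h1 : (∑ s : Fin M → Bool, cw γ J x.1 s • -((γ:ℂ) • e M (P M x', s)))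
        = ∑ s : Fin M → Bool, (-(γ:ℂ) * cw γ J x.1 s) • e M (P M x', s) := by
      refine Finset.sum_congr rfl fun s _ => ?_
      rw [smul_neg, smul_smul]
      rw [← neg_smul]
      ring_nf
    rw [h1, h2, ← Finset.sum_add_distrib]
    rw [show wvec γ J M x' = ∑ s : Fin M → Bool, cw γ J (x.1+1) s • e M (P M x', s) from rfl]
    refine Finset.sum_congr rfl fun s _ => ?_
    rw [← add_smul, key_forward γ J x h s]
  · simp only [dif_neg h, smul_zero, neg_zero, Finset.sum_const_zero, add_zero]

lemma backward_pair (γ J : ℝ) (x : Fin M) :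
    (∑ s : Fin M → Bool, cw γ J x.1 s •
        -(if h : 0 < x.1 then (γ:ℂ) • e M (P M ⟨x.1-1, by have := x.2; omega⟩, s) else 0))
    + (∑ s : Fin M → Bool, cw γ J x.1 s •
        (if h : 0 < x.1 then
          (if s x = true then
            (J:ℂ) • e M (P M ⟨x.1-1, by have := x.2; omega⟩, Function.update s x false) else 0)
        else 0))
    = (lam γ J : ℂ) • (if h : 0 < x.1 then wvec γ J M ⟨x.1-1, by have := x.2; omega⟩ else 0) := by
  by_cases h : 0 < x.1
  · simp only [dif_pos h]
    set y : Fin M := ⟨x.1-1, by have := x.2; omega⟩ with hy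
    have h2 : (∑ s : Fin M → Bool, cw γ J x.1 s •
          (if s x = true then (J:ℂ) • e M (P M y, Function.update s x false) else 0))
        = ∑ s : Fin M → Bool, (if s x = false then
            (J:ℂ) * cw γ J x.1 (Function.update s x true) else 0) • e M (P M y, s) := by
      have step1 : (∑ s : Fin M → Bool, cw γ J x.1 s •
            (if s x = true then (J:ℂ) • e M (P M y, Function.update s x false) else 0))
          = ∑ s : Fin M → Bool, (if s x = true then
              (fun t => ((J:ℂ) * cw γ J x.1 (Function.update t x true)) • e M (P M y, t))
                (Function.update s x false) else 0) := by
        refine Finset.sum_congr rfl fun s _ => ?_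
        rcases hs : s x with _ | _
        · simp only [reduceIte, Bool.false_eq_true, if_false, smul_zero]
        · simp only [reduceIte]
          rw [smul_smul, Function.update_idem]
          rw [show Function.update s x true = s by rw [← hs, Function.update_eq_self]]
          ring_nf
      refine step1.trans (Eq.trans (sum_update_false x
        (fun t => ((J:ℂ) * cw γ J x.1 (Function.update t x true)) • e M (P M y, t))) ?_)
      refine Finset.sum_congr rfl fun s _ => ?_
      rcases hs : s x with _ | _
      · simp only [reduceIte, ite_smul, zero_smul]
      · simp only [reduceIte, Bool.true_eq_false, if_false, zero_smul]
    have h1 : (∑ s : Fin M → Bool, cw γ J x.1 s • -((γ:ℂ) • e M (P M y, s)))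
        = ∑ s : Fin M → Bool, (-(γ:ℂ) * cw γ J x.1 s) • e M (P M y, s) := by
      refine Finset.sum_congr rfl fun s _ => ?_
      rw [smul_neg, smul_smul, ← neg_smul]
      ring_nf
    rw [h1, h2, ← Finset.sum_add_distrib]
    rw [show wvec γ J M y = ∑ s : Fin M → Bool, cw γ J (x.1-1) s • e M (P M y, s) from rfl,
      Finset.smul_sum]
    refine Finset.sum_congr rfl fun s _ => ?_
    rw [← add_smul, key_backward γ J x h s, smul_smul]
  · simp only [dif_neg h, smul_zero, neg_zero, Finset.sum_const_zero, add_zero]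

lemma Hmu_wvec (γ J : ℝ) (μ : Fin M → ℝ) (x : Fin M) :
    Hmu M μ (wvec γ J M x) = (μ x : ℂ) • wvec γ J M x := by
  rw [wvec, map_sum, Finset.smul_sum]
  refine Finset.sum_congr rfl fun s _ => ?_
  rw [map_smul, Hmu_e, smul_smul, smul_smul, mul_comm]

lemma H_wvec (γ J : ℝ) (μ : Fin M → ℝ) (x : Fin M) :
    (Hgam M (fun _ => γ) + HJop M (fun _ => J) + Hmu M μ) (wvec γ J M x)
    = (if h : x.1+1 < M then wvec γ J M ⟨x.1+1, h⟩ else 0)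
      + (lam γ J : ℂ) • (if h : 0 < x.1 then wvec γ J M ⟨x.1-1, by have := x.2; omega⟩ else 0)
      + (μ x : ℂ) • wvec γ J M x := by
  have HG : Hgam M (fun _ => γ) (wvec γ J M x)
      = (∑ s : Fin M → Bool, cw γ J x.1 s •
          -(if h : x.1+1 < M then (γ:ℂ) • e M (P M ⟨x.1+1, h⟩, s) else 0))
        + (∑ s : Fin M → Bool, cw γ J x.1 s •
          -(if h : 0 < x.1 then (γ:ℂ) • e M (P M ⟨x.1-1, by have := x.2; omega⟩, s) else 0)) := by
    rw [wvec, map_sum, ← Finset.sum_add_distrib]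
    refine Finset.sum_congr rfl fun s _ => ?_
    rw [map_smul, Hgam_e, smul_add]
  have HJ : HJop M (fun _ => J) (wvec γ J M x)
      = (∑ s : Fin M → Bool, cw γ J x.1 s •
          (if h : x.1+1 < M then
            (if s ⟨x.1+1, h⟩ = false then
              (J:ℂ) • e M (P M ⟨x.1+1, h⟩, Function.update s ⟨x.1+1, h⟩ true) else 0)
          else 0))
        + (∑ s : Fin M → Bool, cw γ J x.1 s •
          (if h : 0 < x.1 then
            (if s x = true then
              (J:ℂ) • e M (P M ⟨x.1-1, by have := x.2; omega⟩, Function.update s x false) else 0)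
          else 0)) := by
    rw [wvec, map_sum, ← Finset.sum_add_distrib]
    refine Finset.sum_congr rfl fun s _ => ?_
    rw [map_smul, HJop_e, smul_add]
  rw [LinearMap.add_apply, LinearMap.add_apply, HG, HJ, Hmu_wvec γ J μ x,
    ← forward_pair γ J x, ← backward_pair γ J x]
  abel

lemma nOcc_P (x : Fin M) : nOcc M (P M x) = 1 := by
  unfold nOcc
  have : (Finset.univ.filter fun m => P M x m = true) = {x} := by
    ext m; simp [P]
  rw [this, Finset.card_singleton]

/-- the small invariant subspace -/
noncomputable def spanW (γ J : ℝ) (M : ℕ) : Submodule ℂ (V M) :=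
  Submodule.span ℂ (Set.range (wvec γ J M))

lemma wvec_mem_spanW (γ J : ℝ) (x : Fin M) : wvec γ J M x ∈ spanW γ J M :=
  Submodule.subset_span ⟨x, rfl⟩

lemma H_wvec_mem (γ J : ℝ) (μ : Fin M → ℝ) (x : Fin M) :
    (Hgam M (fun _ => γ) + HJop M (fun _ => J) + Hmu M μ) (wvec γ J M x) ∈ spanW γ J M := by
  rw [H_wvec]
  refine Submodule.add_mem _ (Submodule.add_mem _ ?_ ?_) ?_
  · by_cases h : x.1 + 1 < M
    · rw [dif_pos h]; exact wvec_mem_spanW γ J _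
    · rw [dif_neg h]; exact Submodule.zero_mem _
  · refine Submodule.smul_mem _ _ ?_
    by_cases h : 0 < x.1
    · rw [dif_pos h]; exact wvec_mem_spanW γ J _
    · rw [dif_neg h]; exact Submodule.zero_mem _
  · exact Submodule.smul_mem _ _ (wvec_mem_spanW γ J x)

lemma H_maps_spanW (γ J : ℝ) (μ : Fin M → ℝ) {v : V M} (hv : v ∈ spanW γ J M) :
    (Hgam M (fun _ => γ) + HJop M (fun _ => J) + Hmu M μ) v ∈ spanW γ J M := by
  induction hv using Submodule.span_induction with
  | mem v hv => obtain ⟨x, rfl⟩ := hv; exact H_wvec_mem γ J μ x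
  | zero => rw [map_zero]; exact Submodule.zero_mem _
  | add u w _ _ hu hw => rw [map_add]; exact Submodule.add_mem _ hu hw
  | smul c u _ hu => rw [map_smul]; exact Submodule.smul_mem _ _ hu

lemma pow_H_mem (γ J : ℝ) (μ : Fin M → ℝ) (x : Fin M) (k : ℕ) :
    ((Hgam M (fun _ => γ) + HJop M (fun _ => J) + Hmu M μ) ^ k) (wvec γ J M x)
      ∈ spanW γ J M := by
  induction k with
  | zero => simpa using wvec_mem_spanW γ J x
  | succ n ih =>
      rw [pow_succ', Module.End.mul_apply]
      exact H_maps_spanW γ J μ ih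

lemma wvec_apply_self (γ J : ℝ) (x : Fin M) (t : Fin M → Bool) :
    wvec γ J M x (P M x, t) = cw γ J x.1 t := by
  rw [wvec, Finset.sum_apply]
  rw [Finset.sum_eq_single t]
  · rw [Pi.smul_apply, e, Pi.single_eq_same, smul_eq_mul, mul_one]
  · intro s _ hst
    rw [Pi.smul_apply, e, Pi.single_apply,
      if_neg (fun hc => hst (congrArg Prod.snd hc).symm), smul_zero]
  · intro h; exact absurd (Finset.mem_univ t) h

lemma wvec_mem_sectorUp (γ J : ℝ) (hM : 0 < M) (x : Fin M) :
    wvec γ J M x ∈ sectorUp M hM 1 := by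
  rw [wvec]
  refine Submodule.sum_mem _ fun s _ => ?_
  by_cases hs : s ⟨0, hM⟩ = true
  · exact Submodule.smul_mem _ _
      (Submodule.subset_span ⟨(P M x, s), nOcc_P x, hs, rfl⟩)
  · have hz : cw γ J x.1 s = 0 := by
      refine Finset.prod_eq_zero (Finset.mem_univ (⟨0, hM⟩ : Fin M)) ?_
      have hsf : s ⟨0, hM⟩ = false := by
        rcases hb : s ⟨0, hM⟩ with _ | _
        · rfl
        · exact absurd hb hs
      simp [aamp, hsf]
    rw [hz, zero_smul]
    exact Submodule.zero_mem _

lemma e_injective (M : ℕ) : Function.Injective (e M) := by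
  intro p q h
  by_contra hne
  have := congrFun h p
  simp [e, Pi.single_apply, Ne.symm hne] at this

lemma card_occ_one : Nat.card {n : Fin M → Bool // nOcc M n = 1} = M := by
  have hbij : Function.Bijective
      (fun x : Fin M => (⟨P M x, nOcc_P x⟩ : {n : Fin M → Bool // nOcc M n = 1})) := by
    constructor
    · intro x y hxy
      have := congrFun (congrArg Subtype.val hxy) x
      simp [P] at this
      exact this
    · rintro ⟨n, hn⟩
      obtain ⟨a, ha⟩ := Finset.card_eq_one.mp hn
      refine ⟨a, Subtype.ext ?_⟩
      have hmem : ∀ j, n j = true ↔ j = a := by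
        intro j
        constructor
        · intro h
          have : j ∈ Finset.univ.filter fun m => n m = true :=
            Finset.mem_filter.mpr ⟨Finset.mem_univ _, h⟩
          rw [ha] at this
          exact Finset.mem_singleton.mp this
        · rintro rfl
          have : j ∈ ({j} : Finset (Fin M)) := Finset.mem_singleton.mpr rfl
          rw [← ha] at this
          exact (Finset.mem_filter.mp this).2
      funext j
      rcases eq_or_ne j a with rfl | hj
      · simp [P, (hmem _).mpr rfl]
      · have hnj : n j = false := by
          rcases hb : n j with _ | _
          · rfl
          · exact absurd ((hmem j).mp hb) hj
        simp [P, hj, hnj]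
  rw [Nat.card_eq_fintype_card, ← Fintype.card_of_bijective hbij, Fintype.card_fin]

lemma card_spin_up (hM : 0 < M) :
    Nat.card {s : Fin M → Bool // s ⟨0, hM⟩ = true} = 2^(M-1) := by
  classical
  let z : Fin M := ⟨0, hM⟩
  let E : {s : Fin M → Bool // s z = true} ≃ ({j : Fin M // j ≠ z} → Bool) :=
    { toFun := fun s j => s.1 j.1
      invFun := fun g => ⟨fun j => if hj : j = z then true else g ⟨j, hj⟩, by simp⟩
      left_inv := by
        rintro ⟨s, hs⟩
        apply Subtype.ext
        funext j
        show (if hj : j = z then true else s j) = s j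
        by_cases hj : j = z
        · subst hj; rw [dif_pos rfl, hs]
        · rw [dif_neg hj]
      right_inv := by
        intro g
        funext j
        show (if hj : j.1 = z then true else g ⟨j.1, hj⟩) = g j
        rw [dif_neg j.2] }
  rw [Nat.card_congr E, Nat.card_eq_fintype_card, Fintype.card_fun]
  have hc : Fintype.card {j : Fin M // j ≠ z} = M - 1 := by
    have := Fintype.card_subtype_compl (fun j : Fin M => j = z)
    rw [Fintype.card_subtype_eq, Fintype.card_fin] at this
    exact this
  rw [hc, Fintype.card_bool]

lemma finrank_sectorUp (hM : 0 < M) :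
    Module.finrank ℂ (sectorUp M hM 1) = M * 2^(M-1) := by
  classical
  set T : Set (Cfg M) := {p | nOcc M p.1 = 1 ∧ p.2 ⟨0, hM⟩ = true} with hT
  have hset : { v | ∃ p : Cfg M, nOcc M p.1 = 1 ∧ p.2 ⟨0, hM⟩ = true ∧ v = e M p }
      = e M '' T := by
    ext v
    constructor
    · rintro ⟨p, h1, h2, rfl⟩; exact ⟨p, ⟨h1, h2⟩, rfl⟩
    · rintro ⟨p, ⟨h1, h2⟩, rfl⟩; exact ⟨p, h1, h2, rfl⟩
  have hli : LinearIndependent ℂ ((↑) : (e M '' T) → V M) := by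
    have hb : LinearIndependent ℂ (e M) := by
      have he : e M = ⇑(Pi.basisFun ℂ (Cfg M)) := by
        funext p; rw [Pi.basisFun_apply]; rfl
      rw [he]; exact (Pi.basisFun ℂ (Cfg M)).linearIndependent
    exact LinearIndepOn.mono (v := id) (s := Set.range (e M)) hb.linearIndepOn_id (Set.image_subset_range _ _)
  haveI : Fintype ↥T := (Set.toFinite T).fintype
  haveI : Fintype ↥(e M '' T) := ((Set.toFinite T).image (e M)).fintype
  rw [sectorUp, hset, finrank_span_set_eq_card hli, Set.toFinset_card,
    ← Nat.card_eq_fintype_card]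
  have h2 : Nat.card ↥T = M * 2^(M-1) := by
    have hE := Nat.card_congr
      (@Equiv.subtypeProdEquivProd (Fin M → Bool) (Fin M → Bool)
        (fun n => nOcc M n = 1) (fun s => s ⟨0, hM⟩ = true))
    rw [Nat.card_prod, card_occ_one, card_spin_up hM] at hE
    exact hE
  exact (Nat.card_congr (Equiv.Set.image (e M) T (e_injective M)).symm).trans h2

/-- witness spin configuration -/
noncomputable def sstar (J : ℝ) (M : ℕ) : Fin M → Bool :=
  fun j => if j.1 = 0 then true else !(decide (J = 0))

lemma cw_sstar_ne (γ J : ℝ) (hγ : γ ≠ 0) : cw γ J 0 (sstar J M) ≠ 0 := by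
  rw [cw]
  rw [Finset.prod_ne_zero_iff]
  intro j _
  by_cases hj : j.1 = 0
  · rw [sstar]
    simp only [hj, if_pos rfl]
    rw [aamp, if_pos hj]
    norm_num
  · rw [sstar]
    simp only [if_neg hj]
    rw [aamp, if_neg hj, if_neg (by omega : ¬ j.1 ≤ 0)]
    by_cases hJ : J = 0
    · rw [if_neg (by simp [hJ])]
      exact Complex.ofReal_ne_zero.mpr (va_ne γ J hJ)
    · rw [if_pos (by simp [hJ])]
      exact Complex.ofReal_ne_zero.mpr (vb_ne γ J hγ hJ)

lemma wvec0_ne (γ J : ℝ) (hγ : γ ≠ 0) (hM : 0 < M) : wvec γ J M ⟨0, hM⟩ ≠ 0 := by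
  intro h
  have := congrFun h (P M ⟨0, hM⟩, sstar J M)
  rw [wvec_apply_self, Pi.zero_apply] at this
  exact cw_sstar_ne γ J hγ this

lemma finrank_spanW_le (γ J : ℝ) : Module.finrank ℂ (spanW γ J M) ≤ M := by
  have h : Set.range (wvec γ J M) = ↑(Finset.image (wvec γ J M) Finset.univ) := by
    simp
  rw [spanW, h]
  refine le_trans (finrank_span_finset_le_card _) ?_
  refine le_trans Finset.card_image_le ?_
  simp

end Frag


open QuantumBreakdown

/-- for `M = 4Z+3` and uniform couplings `γ ≠ 0`, `J`, there is a
nonzero `Ψ ∈ W₁^↑`, independent of the on-site potential, whose Krylov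
subspace under `H_γ + H_J + H_μ` has dimension at most `M·2^{3Z+1}` for every
on-site potential `μ`; since `dim W₁^↑ = M·2^{4Z+2}`, this Krylov subspace is a
proper subspace of `W₁^↑` for every `μ`: fragmentation of the `Q = 1` sector
survives an arbitrary on-site potential. -/
theorem fragmentation_survives_potential (M Z : ℕ) (hMZ : M = 4 * Z + 3)
    (γ J : ℝ) (hγ : γ ≠ 0) :
    Module.finrank ℂ ↥(sectorUp M (by omega) 1) = M * 2 ^ (4 * Z + 2) ∧
    ∃ Ψ : V M, Ψ ∈ sectorUp M (by omega) 1 ∧ Ψ ≠ 0 ∧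
      ∀ μ : Fin M → ℝ,
        Module.finrank ℂ
            ↥(Submodule.span ℂ (Set.range fun k : ℕ =>
              ((Hgam M (fun _ => γ) + HJop M (fun _ => J) + Hmu M μ) ^ k) Ψ))
          ≤ M * 2 ^ (3 * Z + 1)
        ∧ Submodule.span ℂ (Set.range fun k : ℕ =>
            ((Hgam M (fun _ => γ) + HJop M (fun _ => J) + Hmu M μ) ^ k) Ψ)
          < sectorUp M (by omega) 1 := by
  subst hMZ
  set M := 4 * Z + 3 with hMdef
  have hM : 0 < M := by omega
  have hMexp : M - 1 = 4 * Z + 2 := by omega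
  constructor
  · rw [Frag.finrank_sectorUp hM, hMexp]
  · refine ⟨Frag.wvec γ J M ⟨0, hM⟩, Frag.wvec_mem_sectorUp γ J hM _,
      Frag.wvec0_ne γ J hγ hM, fun μ => ?_⟩
    have hKry : Submodule.span ℂ (Set.range fun k : ℕ =>
        ((Hgam M (fun _ => γ) + HJop M (fun _ => J) + Hmu M μ) ^ k) (Frag.wvec γ J M ⟨0, hM⟩))
        ≤ Frag.spanW γ J M := by
      rw [Submodule.span_le]
      rintro v ⟨k, rfl⟩
      exact Frag.pow_H_mem γ J μ _ k
    have hWS : Frag.spanW γ J M ≤ sectorUp M hM 1 := by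
      rw [Frag.spanW, Submodule.span_le]
      rintro v ⟨x, rfl⟩
      exact Frag.wvec_mem_sectorUp γ J hM x
    have hfin : Module.finrank ℂ
        ↥(Submodule.span ℂ (Set.range fun k : ℕ =>
          ((Hgam M (fun _ => γ) + HJop M (fun _ => J) + Hmu M μ) ^ k)
            (Frag.wvec γ J M ⟨0, hM⟩))) ≤ M * 2 ^ (3 * Z + 1) := by
      refine le_trans (Submodule.finrank_mono hKry) ?_
      refine le_trans (Frag.finrank_spanW_le γ J) ?_
      exact Nat.le_mul_of_pos_right M (Nat.pow_pos (by norm_num))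
    refine ⟨hfin, lt_of_le_of_ne (le_trans hKry hWS) fun heq => ?_⟩
    have h1 := Frag.finrank_sectorUp (M := M) hM
    rw [← heq] at h1
    rw [h1, hMexp] at hfin
    have hlt : M * 2 ^ (3 * Z + 1) < M * 2 ^ (4 * Z + 2) :=
      Nat.mul_lt_mul_of_pos_left (Nat.pow_lt_pow_right one_lt_two (by omega)) hM
    exact absurd hfin (not_le.mpr hlt)
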